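/- Let A be a real symmetric matrix and X₀ ∈ O(n). Then X(t) = (sinh(At) + cosh(At)·X₀)·(cosh(At) + sinh(At)·X₀)⁻¹ is well-defined for all t (the matrix cosh(At) + sinh(At)X₀ is invertible), satisfies X(0) = X₀, remains in O(n), and solves the differential equation Ẋ = A - XAX. -/

import Mathlib

open Matrix

attribute [local instance] Matrix.linftyOpNormedAddCommGroup Matrix.linftyOpNormedRing
  Matrix.linftyOpNormedAlgebra

/-- Matrix hyperbolic sine, `sinh M = (exp M - exp (-M))/2`. -/
noncomputable def matrixSinh {n : ℕ} (M : Matrix (Fin n) (Fin n) ℝ) :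
    Matrix (Fin n) (Fin n) ℝ :=
  (1 / 2 : ℝ) • (NormedSpace.exp M - NormedSpace.exp (-M))

/-- Matrix hyperbolic cosine, `cosh M = (exp M + exp (-M))/2`. -/
noncomputable def matrixCosh {n : ℕ} (M : Matrix (Fin n) (Fin n) ℝ) :
    Matrix (Fin n) (Fin n) ℝ :=
  (1 / 2 : ℝ) • (NormedSpace.exp M + NormedSpace.exp (-M))

section Aux

variable {n : ℕ}

lemma aux_dot_symm (P : Matrix (Fin n) (Fin n) ℝ) (hP : Pᵀ = P) (v w : Fin n → ℝ) :
    v ⬝ᵥ (P *ᵥ w) = (P *ᵥ v) ⬝ᵥ w := by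
  rw [dotProduct_mulVec, ← mulVec_transpose, hP]

lemma aux_dp_nonneg (v : Fin n → ℝ) : 0 ≤ v ⬝ᵥ v :=
  Finset.sum_nonneg fun i _ => mul_self_nonneg _

lemma aux_isUnit_of_ker (M : Matrix (Fin n) (Fin n) ℝ)
    (h : ∀ v, M *ᵥ v = 0 → v = 0) : IsUnit M := by
  rw [Matrix.isUnit_iff_isUnit_det, isUnit_iff_ne_zero]
  intro hdet
  obtain ⟨v, hv, hMv⟩ := (Matrix.exists_mulVec_eq_zero_iff).mpr hdet
  exact hv (h v hMv)

lemma aux_isUnit_C {C S : Matrix (Fin n) (Fin n) ℝ} (hSt : Sᵀ = S)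
    (h1 : C * C = 1 + S * S) : IsUnit C := by
  apply aux_isUnit_of_ker
  intro v hv
  have h2 : v ⬝ᵥ ((C * C) *ᵥ v) = 0 := by
    rw [← mulVec_mulVec, hv, mulVec_zero, dotProduct_zero]
  rw [h1, add_mulVec, one_mulVec, dotProduct_add, ← mulVec_mulVec,
    aux_dot_symm S hSt] at h2
  have h3 : v ⬝ᵥ v = 0 :=
    le_antisymm (by nlinarith [aux_dp_nonneg (S *ᵥ v)]) (aux_dp_nonneg v)
  exact dotProduct_self_eq_zero.mp h3

lemma aux_isUnit {C S X₀ : Matrix (Fin n) (Fin n) ℝ} (hCt : Cᵀ = C) (hSt : Sᵀ = S)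
    (hCS : C * S = S * C) (h1 : C * C = 1 + S * S) (hX : X₀ᵀ * X₀ = 1) :
    IsUnit (C + S * X₀) := by
  have hCu : IsUnit C := aux_isUnit_C hSt h1
  have hCd : IsUnit C.det := (Matrix.isUnit_iff_isUnit_det C).mp hCu
  have hCC : C * C⁻¹ = 1 := Matrix.mul_nonsing_inv C hCd
  have hCC' : C⁻¹ * C = 1 := Matrix.nonsing_inv_mul C hCd
  have hDt : (C⁻¹)ᵀ = C⁻¹ := by rw [Matrix.transpose_nonsing_inv, hCt]
  have hDS : C⁻¹ * S = S * C⁻¹ := by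
    calc C⁻¹ * S = C⁻¹ * S * (C * C⁻¹) := by rw [hCC, mul_one]
      _ = C⁻¹ * (S * C) * C⁻¹ := by simp only [mul_assoc]
      _ = C⁻¹ * (C * S) * C⁻¹ := by rw [hCS]
      _ = (C⁻¹ * C) * (S * C⁻¹) := by simp only [mul_assoc]
      _ = S * C⁻¹ := by rw [hCC', one_mul]
  have hTt : (C⁻¹ * S)ᵀ = C⁻¹ * S := by
    rw [Matrix.transpose_mul, hSt, hDt, ← hDS]
  have hTT : (C⁻¹ * S) * (C⁻¹ * S) = 1 - C⁻¹ * C⁻¹ := by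
    calc (C⁻¹ * S) * (C⁻¹ * S) = C⁻¹ * (S * C⁻¹) * S := by simp only [mul_assoc]
      _ = C⁻¹ * (C⁻¹ * S) * S := by rw [← hDS]
      _ = C⁻¹ * C⁻¹ * (S * S) := by simp only [mul_assoc]
      _ = C⁻¹ * C⁻¹ * (C * C) - C⁻¹ * C⁻¹ := by
          rw [h1, mul_add, mul_one, add_sub_cancel_left]
      _ = 1 - C⁻¹ * C⁻¹ := by
          rw [show C⁻¹ * C⁻¹ * (C * C) = C⁻¹ * (C⁻¹ * C) * C by simp only [mul_assoc],
            hCC', mul_one, hCC']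
  apply aux_isUnit_of_ker
  intro v hv
  have hw2 : C *ᵥ v = -(S *ᵥ (X₀ *ᵥ v)) := by
    apply eq_neg_of_add_eq_zero_left
    rw [mulVec_mulVec, ← add_mulVec, hv]
  have hv' : v = -((C⁻¹ * S) *ᵥ (X₀ *ᵥ v)) := by
    calc v = (C⁻¹ * C) *ᵥ v := by rw [hCC', one_mulVec]
      _ = C⁻¹ *ᵥ (C *ᵥ v) := by rw [← mulVec_mulVec]
      _ = -((C⁻¹ * S) *ᵥ (X₀ *ᵥ v)) := by rw [hw2, mulVec_neg, mulVec_mulVec]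
  set w := X₀ *ᵥ v with hwdef
  have hww : w ⬝ᵥ w = v ⬝ᵥ v := by
    calc w ⬝ᵥ w = (w ᵥ* X₀) ⬝ᵥ v := by rw [hwdef, dotProduct_mulVec]
      _ = (X₀ᵀ *ᵥ w) ⬝ᵥ v := by rw [mulVec_transpose]
      _ = ((X₀ᵀ * X₀) *ᵥ v) ⬝ᵥ v := by rw [hwdef, mulVec_mulVec]
      _ = v ⬝ᵥ v := by rw [hX, one_mulVec]
  have hvv : v ⬝ᵥ v = w ⬝ᵥ w - (C⁻¹ *ᵥ w) ⬝ᵥ (C⁻¹ *ᵥ w) := by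
    calc v ⬝ᵥ v = ((C⁻¹ * S) *ᵥ w) ⬝ᵥ ((C⁻¹ * S) *ᵥ w) := by
          rw [hv']; rw [neg_dotProduct, dotProduct_neg, neg_neg]
      _ = w ⬝ᵥ ((C⁻¹ * S) *ᵥ ((C⁻¹ * S) *ᵥ w)) :=
          (aux_dot_symm _ hTt w _).symm
      _ = w ⬝ᵥ (((C⁻¹ * S) * (C⁻¹ * S)) *ᵥ w) := by rw [mulVec_mulVec]
      _ = w ⬝ᵥ w - w ⬝ᵥ ((C⁻¹ * C⁻¹) *ᵥ w) := by
          rw [hTT, sub_mulVec, one_mulVec, dotProduct_sub]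
      _ = w ⬝ᵥ w - (C⁻¹ *ᵥ w) ⬝ᵥ (C⁻¹ *ᵥ w) := by
          rw [← mulVec_mulVec]; congr 1; exact aux_dot_symm _ hDt w _
  have hCw : C⁻¹ *ᵥ w = 0 := by
    have h0 : (C⁻¹ *ᵥ w) ⬝ᵥ (C⁻¹ *ᵥ w) = 0 := by rw [hww] at hvv; linarith
    exact dotProduct_self_eq_zero.mp h0
  have hw0 : w = 0 := by
    calc w = (C * C⁻¹) *ᵥ w := by rw [hCC, one_mulVec]
      _ = C *ᵥ (C⁻¹ *ᵥ w) := by rw [← mulVec_mulVec]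
      _ = 0 := by rw [hCw, mulVec_zero]
  have : v ⬝ᵥ v = 0 := by rw [← hww, hw0, dotProduct_zero]
  exact dotProduct_self_eq_zero.mp this

lemma aux_NtN_eq_MtM {C S X₀ : Matrix (Fin n) (Fin n) ℝ} (hCt : Cᵀ = C) (hSt : Sᵀ = S)
    (hCS : C * S = S * C) (h1 : C * C = 1 + S * S) (hX : X₀ᵀ * X₀ = 1) :
    (S + C * X₀)ᵀ * (S + C * X₀) = (C + S * X₀)ᵀ * (C + S * X₀) := by
  have e1 : (C + S * X₀)ᵀ = C + X₀ᵀ * S := by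
    rw [transpose_add, transpose_mul, hCt, hSt]
  have e2 : (S + C * X₀)ᵀ = S + X₀ᵀ * C := by
    rw [transpose_add, transpose_mul, hCt, hSt]
  rw [e1, e2]
  have L : (S + X₀ᵀ * C) * (S + C * X₀)
      = S * S + (S * C) * X₀ + X₀ᵀ * (C * S) + X₀ᵀ * ((C * C) * X₀) := by
    noncomm_ring
  have R : (C + X₀ᵀ * S) * (C + S * X₀)
      = C * C + (C * S) * X₀ + X₀ᵀ * (S * C) + X₀ᵀ * ((S * S) * X₀) := by
    noncomm_ring
  rw [L, R, hCS, h1, add_mul, one_mul, mul_add, hX]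
  abel

lemma aux_orth {C S X₀ : Matrix (Fin n) (Fin n) ℝ} (hCt : Cᵀ = C) (hSt : Sᵀ = S)
    (hCS : C * S = S * C) (h1 : C * C = 1 + S * S) (hX : X₀ᵀ * X₀ = 1)
    (hM : IsUnit (C + S * X₀).det) :
    ((S + C * X₀) * (C + S * X₀)⁻¹)ᵀ * ((S + C * X₀) * (C + S * X₀)⁻¹) = 1 := by
  have hNM := aux_NtN_eq_MtM hCt hSt hCS h1 hX
  have hMt : IsUnit ((C + S * X₀)ᵀ).det := by rwa [Matrix.det_transpose]
  rw [transpose_mul]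
  calc ((C + S * X₀)⁻¹)ᵀ * (S + C * X₀)ᵀ * ((S + C * X₀) * (C + S * X₀)⁻¹)
      = ((C + S * X₀)⁻¹)ᵀ * ((S + C * X₀)ᵀ * (S + C * X₀)) * (C + S * X₀)⁻¹ := by
        simp only [mul_assoc]
    _ = ((C + S * X₀)⁻¹)ᵀ * ((C + S * X₀)ᵀ * (C + S * X₀)) * (C + S * X₀)⁻¹ := by
        rw [hNM]
    _ = (((C + S * X₀)ᵀ)⁻¹ * (C + S * X₀)ᵀ) * ((C + S * X₀) * (C + S * X₀)⁻¹) := by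
        rw [Matrix.transpose_nonsing_inv]; simp only [mul_assoc]
    _ = 1 := by
        rw [Matrix.nonsing_inv_mul _ hMt, Matrix.mul_nonsing_inv _ hM, one_mul]

end Aux

theorem explicit_solution_of_gradient_flow (n : ℕ)
    (A X₀ : Matrix (Fin n) (Fin n) ℝ) (hA : Aᵀ = A) (hX₀ : X₀ᵀ * X₀ = 1) :
    (∀ t : ℝ, IsUnit (matrixCosh (t • A) + matrixSinh (t • A) * X₀)) ∧
    (fun t : ℝ => (matrixSinh (t • A) + matrixCosh (t • A) * X₀) *
        (matrixCosh (t • A) + matrixSinh (t • A) * X₀)⁻¹) 0 = X₀ ∧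
    (∀ t : ℝ,
      ((matrixSinh (t • A) + matrixCosh (t • A) * X₀) *
          (matrixCosh (t • A) + matrixSinh (t • A) * X₀)⁻¹)ᵀ *
        ((matrixSinh (t • A) + matrixCosh (t • A) * X₀) *
          (matrixCosh (t • A) + matrixSinh (t • A) * X₀)⁻¹) = 1) ∧
    (∀ t : ℝ, HasDerivAt
      (fun s : ℝ => (matrixSinh (s • A) + matrixCosh (s • A) * X₀) *
        (matrixCosh (s • A) + matrixSinh (s • A) * X₀)⁻¹)
      (A - ((matrixSinh (t • A) + matrixCosh (t • A) * X₀) *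
              (matrixCosh (t • A) + matrixSinh (t • A) * X₀)⁻¹) * A *
            ((matrixSinh (t • A) + matrixCosh (t • A) * X₀) *
              (matrixCosh (t • A) + matrixSinh (t • A) * X₀)⁻¹)) t) := by
  -- basic facts about the exponentials
  have hAt : ∀ t : ℝ, (t • A)ᵀ = t • A := fun t => by rw [Matrix.transpose_smul, hA]
  have hEt : ∀ t : ℝ, (NormedSpace.exp (t • A))ᵀ = NormedSpace.exp (t • A) := fun t => by
    rw [← Matrix.exp_transpose, hAt]
  have hFt : ∀ t : ℝ, (NormedSpace.exp (-(t • A)))ᵀ = NormedSpace.exp (-(t • A)) := fun t => by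
    rw [← Matrix.exp_transpose, Matrix.transpose_neg, hAt]
  have hEF : ∀ t : ℝ, NormedSpace.exp (t • A) * NormedSpace.exp (-(t • A)) = 1 := fun t => by
    rw [← Matrix.exp_add_of_commute _ _ ((Commute.refl (t • A)).neg_right),
      add_neg_cancel, NormedSpace.exp_zero]
  have hFE : ∀ t : ℝ, NormedSpace.exp (-(t • A)) * NormedSpace.exp (t • A) = 1 := fun t => by
    rw [← Matrix.exp_add_of_commute _ _ ((Commute.refl (t • A)).neg_left),
      neg_add_cancel, NormedSpace.exp_zero]
  have hCt : ∀ t : ℝ, (matrixCosh (t • A))ᵀ = matrixCosh (t • A) := fun t => by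
    rw [matrixCosh, Matrix.transpose_smul, Matrix.transpose_add, hEt, hFt]
  have hSt : ∀ t : ℝ, (matrixSinh (t • A))ᵀ = matrixSinh (t • A) := fun t => by
    rw [matrixSinh, Matrix.transpose_smul, Matrix.transpose_sub, hEt, hFt]
  have hCS : ∀ t : ℝ, matrixCosh (t • A) * matrixSinh (t • A)
      = matrixSinh (t • A) * matrixCosh (t • A) := fun t => by
    rw [matrixCosh, matrixSinh, smul_mul_smul_comm, smul_mul_smul_comm]
    congr 1
    have L : (NormedSpace.exp (t • A) + NormedSpace.exp (-(t • A)))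
        * (NormedSpace.exp (t • A) - NormedSpace.exp (-(t • A)))
        = NormedSpace.exp (t • A) * NormedSpace.exp (t • A)
          - NormedSpace.exp (-(t • A)) * NormedSpace.exp (-(t • A))
          + (NormedSpace.exp (-(t • A)) * NormedSpace.exp (t • A)
            - NormedSpace.exp (t • A) * NormedSpace.exp (-(t • A))) := by
      noncomm_ring
    have R : (NormedSpace.exp (t • A) - NormedSpace.exp (-(t • A)))
        * (NormedSpace.exp (t • A) + NormedSpace.exp (-(t • A)))
        = NormedSpace.exp (t • A) * NormedSpace.exp (t • A)
          - NormedSpace.exp (-(t • A)) * NormedSpace.exp (-(t • A))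
          + (NormedSpace.exp (t • A) * NormedSpace.exp (-(t • A))
            - NormedSpace.exp (-(t • A)) * NormedSpace.exp (t • A)) := by
      noncomm_ring
    rw [L, R, hEF t, hFE t]
  have h1 : ∀ t : ℝ, matrixCosh (t • A) * matrixCosh (t • A)
      = 1 + matrixSinh (t • A) * matrixSinh (t • A) := fun t => by
    rw [matrixCosh, matrixSinh, smul_mul_smul_comm, smul_mul_smul_comm]
    have L : (NormedSpace.exp (t • A) + NormedSpace.exp (-(t • A)))
        * (NormedSpace.exp (t • A) + NormedSpace.exp (-(t • A)))
        = (NormedSpace.exp (t • A) - NormedSpace.exp (-(t • A)))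
          * (NormedSpace.exp (t • A) - NormedSpace.exp (-(t • A)))
          + ((NormedSpace.exp (t • A) * NormedSpace.exp (-(t • A))
            + NormedSpace.exp (-(t • A)) * NormedSpace.exp (t • A))
            + (NormedSpace.exp (t • A) * NormedSpace.exp (-(t • A))
            + NormedSpace.exp (-(t • A)) * NormedSpace.exp (t • A))) := by
      noncomm_ring
    rw [L, hEF t, hFE t, smul_add]
    rw [show ((1 : Matrix (Fin n) (Fin n) ℝ) + 1) + (1 + 1)
        = (4 : ℝ) • (1 : Matrix (Fin n) (Fin n) ℝ) by
      rw [show (4 : ℝ) = 1 + 1 + (1 + 1) by norm_num]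
      simp [add_smul, one_smul]]
    rw [smul_smul]
    norm_num
    abel
  -- invertibility
  have hUnit : ∀ t : ℝ, IsUnit (matrixCosh (t • A) + matrixSinh (t • A) * X₀) := fun t =>
    aux_isUnit (hCt t) (hSt t) (hCS t) (h1 t) hX₀
  have hDet : ∀ t : ℝ, IsUnit (matrixCosh (t • A) + matrixSinh (t • A) * X₀).det := fun t =>
    (Matrix.isUnit_iff_isUnit_det _).mp (hUnit t)
  refine ⟨hUnit, ?_, ?_, ?_⟩
  · -- initial condition
    have hS0 : matrixSinh ((0 : ℝ) • A) = 0 := by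
      rw [matrixSinh, zero_smul, neg_zero, NormedSpace.exp_zero, sub_self, smul_zero]
    have hC0 : matrixCosh ((0 : ℝ) • A) = 1 := by
      rw [matrixCosh, zero_smul, neg_zero, NormedSpace.exp_zero]
      rw [smul_add]
      rw [← add_smul]
      norm_num
    have hone : ((1 : Matrix (Fin n) (Fin n) ℝ))⁻¹ = 1 := by
      rw [Matrix.nonsing_inv_eq_ringInverse, Ring.inverse_one]
    simp only [hS0, hC0, zero_add, one_mul, mul_zero, zero_mul, add_zero, hone, mul_one]
  · -- orthogonality
    intro t
    exact aux_orth (hCt t) (hSt t) (hCS t) (h1 t) hX₀ (hDet t)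
  · -- the differential equation
    intro t
    -- derivatives of the hyperbolic functions
    have hE' : HasDerivAt (fun s : ℝ => NormedSpace.exp (s • A))
        (A * NormedSpace.exp (t • A)) t := hasDerivAt_exp_smul_const' A t
    have hF' : HasDerivAt (fun s : ℝ => NormedSpace.exp (-(s • A)))
        (-(A * NormedSpace.exp (-(t • A)))) t := by
      have h := hasDerivAt_exp_smul_const' (-A) t
      simp only [smul_neg, neg_mul] at h
      exact h
    have hSinh' : HasDerivAt (fun s : ℝ => matrixSinh (s • A))
        (A * matrixCosh (t • A)) t := by
      have h := ((hE'.sub hF').const_smul ((1:ℝ)/2))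
      refine h.congr_deriv ?_
      rw [matrixCosh, sub_neg_eq_add, mul_smul_comm, mul_add]
    have hCosh' : HasDerivAt (fun s : ℝ => matrixCosh (s • A))
        (A * matrixSinh (t • A)) t := by
      have h := ((hE'.add hF').const_smul ((1:ℝ)/2))
      refine h.congr_deriv ?_
      rw [matrixSinh, ← sub_eq_add_neg, mul_smul_comm, mul_sub]
    have hM' : HasDerivAt (fun s : ℝ => matrixCosh (s • A) + matrixSinh (s • A) * X₀)
        (A * (matrixSinh (t • A) + matrixCosh (t • A) * X₀)) t := by
      have h := hCosh'.add (hSinh'.mul_const X₀)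
      refine h.congr_deriv ?_
      rw [mul_add, mul_assoc]
    have hN' : HasDerivAt (fun s : ℝ => matrixSinh (s • A) + matrixCosh (s • A) * X₀)
        (A * (matrixCosh (t • A) + matrixSinh (t • A) * X₀)) t := by
      have h := hSinh'.add (hCosh'.mul_const X₀)
      refine h.congr_deriv ?_
      rw [mul_add, mul_assoc]
    set M := fun s : ℝ => matrixCosh (s • A) + matrixSinh (s • A) * X₀ with hMdef
    set N := fun s : ℝ => matrixSinh (s • A) + matrixCosh (s • A) * X₀ with hNdef
    -- derivative of the inverse
    have hRinv : ∀ s : ℝ, (M s)⁻¹ = Ring.inverse (M s) := fun s =>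
      Matrix.nonsing_inv_eq_ringInverse _
    have hInv : HasDerivAt (fun s : ℝ => (M s)⁻¹)
        (-((M t)⁻¹ * (A * N t) * (M t)⁻¹)) t := by
      have hu := (hUnit t)
      have hfd := hasFDerivAt_ringInverse (𝕜 := ℝ) hu.unit
      rw [hu.unit_spec] at hfd
      have h := hfd.comp_hasDerivAt t hM'
      rw [show (fun s : ℝ => (M s)⁻¹) = Ring.inverse ∘ M from funext hRinv]
      refine h.congr_deriv ?_
      have hcoe : ((hu.unit)⁻¹ : (Matrix (Fin n) (Fin n) ℝ)ˣ) = ((M t)⁻¹ : Matrix (Fin n) (Fin n) ℝ) := by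
        rw [← Ring.inverse_unit hu.unit, hu.unit_spec, hRinv]
      simp [hcoe, ContinuousLinearMap.mulLeftRight_apply, hRinv]
      rfl
    have hX' := hN'.mul hInv
    refine hX'.congr_deriv ?_
    rw [mul_assoc A, Matrix.mul_nonsing_inv _ (hDet t), mul_one, mul_neg, ← sub_eq_add_neg]
    congr 1
    simp only [mul_assoc]
    rfl
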